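/- arXiv:1707.06964 — 2 statements merged into one kernel-verified Lean document; each statement's English description precedes it below -/
import Mathlib

section
/- (Baum–Eagon inequality, linear case) Let A(p) = ∑ i, c i * p i be a linear function with coefficients c i, and suppose p lies in the scaled simplex D with p i > 0 for all i and c i + λ > 0 for all i. Define g(p)_i = ν * p i * (c i + λ) / (∑ j, p j * (c j + λ)). Then g(p) ∈ D and A(g(p)) ≥ A(p), with equality iff c is constant on the support of p. -/
/-- Baum–Eagon inequality, linear case: for `A p = ∑ i, c i * p i`,
`p` in the scaled simplex with all `p i > 0`, and `c i + λ > 0`, the growth transform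
`g i = ν * p i * (c i + λ) / ∑ j, p j * (c j + λ)` stays in the simplex and
`A g ≥ A p`, with equality iff `c` is constant on the support of `p`. -/
theorem stmt3 (N : ℕ) (ν lam : ℝ) (hν : 0 < ν)
    (c : Fin N → ℝ) (hc : ∀ i, 0 < c i + lam)
    (p : Fin N → ℝ) (hp : ∀ i, 0 < p i) (hsum : ∑ i, p i = ν)
    (g : Fin N → ℝ)
    (hg : ∀ i, g i = ν * p i * (c i + lam) / (∑ j, p j * (c j + lam))) :
    (∀ i, 0 ≤ g i) ∧ (∑ i, g i = ν) ∧
    (∑ i, c i * p i ≤ ∑ i, c i * g i) ∧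
    ((∑ i, c i * g i = ∑ i, c i * p i) ↔
      ∀ i j, p i ≠ 0 → p j ≠ 0 → c i = c j) := by
  have hne : (Finset.univ : Finset (Fin N)).Nonempty := by
    by_contra h
    rw [Finset.not_nonempty_iff_eq_empty] at h
    rw [h, Finset.sum_empty] at hsum
    linarith
  set S := ∑ j, p j * (c j + lam) with hSdef
  have hS : 0 < S :=
    Finset.sum_pos (fun i _ => mul_pos (hp i) (hc i)) hne
  set T := ∑ j, c j * p j * (c j + lam) with hTdef
  set A := ∑ i, c i * p i with hAdef
  set E := ∑ i, ∑ j, p i * p j * c j * (c j - c i) with hEdef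
  set Q := ∑ i, ∑ j, p i * p j * (c i - c j) ^ 2 with hQdef
  have key : ν * T - S * A = E := by
    rw [← hsum, hAdef, hTdef, hSdef, hEdef, Finset.sum_mul_sum, Finset.sum_mul_sum,
      ← Finset.sum_sub_distrib]
    refine Finset.sum_congr rfl fun i _ => ?_
    rw [← Finset.sum_sub_distrib]
    exact Finset.sum_congr rfl fun j _ => by ring
  have hswap : E = ∑ i, ∑ j, p i * p j * c i * (c i - c j) := by
    rw [hEdef, Finset.sum_comm]
    exact Finset.sum_congr rfl fun i _ => Finset.sum_congr rfl fun j _ => by ring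
  have h2E : 2 * E = Q := by
    have : E + (∑ i, ∑ j, p i * p j * c i * (c i - c j)) = Q := by
      rw [hEdef, hQdef, ← Finset.sum_add_distrib]
      refine Finset.sum_congr rfl fun i _ => ?_
      rw [← Finset.sum_add_distrib]
      exact Finset.sum_congr rfl fun j _ => by ring
    rw [← hswap] at this
    linarith
  have hQ0 : 0 ≤ Q :=
    Finset.sum_nonneg fun i _ => Finset.sum_nonneg fun j _ =>
      mul_nonneg (mul_nonneg (hp i).le (hp j).le) (sq_nonneg _)
  have hE0 : 0 ≤ E := by linarith
  have hAg : (∑ i, c i * g i) * S = ν * T := by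
    rw [Finset.sum_mul, hTdef, Finset.mul_sum]
    refine Finset.sum_congr rfl fun i _ => ?_
    rw [hg i]
    field_simp
  have hdiff : (∑ i, c i * g i) - A = E / S := by
    rw [eq_div_iff hS.ne', sub_mul, hAg]
    linarith [key]
  have hineq : A ≤ ∑ i, c i * g i := by
    have : 0 ≤ E / S := div_nonneg hE0 hS.le
    linarith
  refine ⟨fun i => ?_, ?_, hineq, ?_⟩
  · rw [hg i]
    exact div_nonneg (mul_nonneg (mul_nonneg hν.le (hp i).le) (hc i).le) hS.le
  · have h1 : ∑ i, g i = (∑ i, ν * (p i * (c i + lam))) / S := by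
      rw [Finset.sum_div]
      exact Finset.sum_congr rfl fun i _ => by rw [hg i]; ring
    rw [h1, ← Finset.mul_sum, ← hSdef]
    exact mul_div_cancel_right₀ ν hS.ne'
  · constructor
    · intro heq i j hi hj
      have hE : E = 0 := by
        have := hdiff
        rw [heq] at this
        have : E / S = 0 := by linarith
        field_simp at this
        simpa using this
      have hQ : Q = 0 := by linarith
      have hall : ∀ i ∈ Finset.univ, ∑ j, p i * p j * (c i - c j) ^ 2 = 0 := by
        rw [← Finset.sum_eq_zero_iff_of_nonneg
          (fun i _ => Finset.sum_nonneg fun j _ =>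
            mul_nonneg (mul_nonneg (hp i).le (hp j).le) (sq_nonneg _))]
        exact hQ
      have hterm : p i * p j * (c i - c j) ^ 2 = 0 := by
        have := hall i (Finset.mem_univ i)
        rw [Finset.sum_eq_zero_iff_of_nonneg
          (fun j _ => mul_nonneg (mul_nonneg (hp i).le (hp j).le) (sq_nonneg _))] at this
        exact this j (Finset.mem_univ j)
      have hpij : 0 < p i * p j := mul_pos (hp i) (hp j)
      have : (c i - c j) ^ 2 = 0 := by
        rcases mul_eq_zero.mp hterm with h | h
        · exact absurd h hpij.ne'
        · exact h
      have := pow_eq_zero_iff (n := 2) (by norm_num) |>.mp this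
      linarith
    · intro hcc
      have hQ : Q = 0 := by
        rw [hQdef]
        refine Finset.sum_eq_zero fun i _ => Finset.sum_eq_zero fun j _ => ?_
        rw [hcc i j (hp i).ne' (hp j).ne']
        ring
      have hE : E = 0 := by linarith
      have := hdiff
      rw [hE, zero_div] at this
      linarith
end

section
/- Monotone improvement of the iteration: for the normalized power iteration p^{t+1}_i = ν p^t_i w_i / ∑_j p^t_j w_j with w_i = λ − q(i) > 0, the objective value H(p^t) = ∑ q(i) p^t_i is nonincreasing in t, and strictly decreasing unless p^t is supported on a level set of q. -/
open Finset

lemma stmt16_iden (N : ℕ) (P q : Fin N → ℝ) :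
    ∑ i, ∑ j, P i * P j * (q i - q j)^2 =
      (∑ i, q i^2 * P i) * (∑ i, P i) + (∑ i, P i) * (∑ i, q i^2 * P i)
        - 2 * ((∑ i, q i * P i) * (∑ i, q i * P i)) := by
  rw [Finset.sum_mul_sum, Finset.sum_mul_sum, Finset.sum_mul_sum,
    ← Finset.sum_add_distrib, Finset.mul_sum, ← Finset.sum_sub_distrib]
  refine Finset.sum_congr rfl fun i _ => ?_
  rw [← Finset.sum_add_distrib, Finset.mul_sum, ← Finset.sum_sub_distrib]
  exact Finset.sum_congr rfl fun j _ => by ring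

lemma stmt16_cs (N : ℕ) (P q : Fin N → ℝ) (hP : ∀ i, 0 < P i) :
    (∑ i, q i * P i)^2 ≤ (∑ i, P i) * (∑ i, q i^2 * P i) := by
  have h := stmt16_iden N P q
  have hnn : (0:ℝ) ≤ ∑ i, ∑ j, P i * P j * (q i - q j)^2 := by
    exact Finset.sum_nonneg fun i _ => Finset.sum_nonneg fun j _ =>
      mul_nonneg (mul_nonneg (hP i).le (hP j).le) (sq_nonneg _)
  nlinarith [h, hnn]

lemma stmt16_cs_strict (N : ℕ) (P q : Fin N → ℝ) (hP : ∀ i, 0 < P i)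
    (i0 j0 : Fin N) (hq : q i0 ≠ q j0) :
    (∑ i, q i * P i)^2 < (∑ i, P i) * (∑ i, q i^2 * P i) := by
  have h := stmt16_iden N P q
  have hpos : (0:ℝ) < ∑ i, ∑ j, P i * P j * (q i - q j)^2 := by
    refine Finset.sum_pos' (fun i _ => Finset.sum_nonneg fun j _ =>
      mul_nonneg (mul_nonneg (hP i).le (hP j).le) (sq_nonneg _)) ⟨i0, Finset.mem_univ _, ?_⟩
    refine Finset.sum_pos' (fun j _ =>
      mul_nonneg (mul_nonneg (hP i0).le (hP j).le) (sq_nonneg _)) ⟨j0, Finset.mem_univ _, ?_⟩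
    exact mul_pos (mul_pos (hP i0) (hP j0))
      (pow_two_pos_of_ne_zero (sub_ne_zero_of_ne hq))
  nlinarith [h, hpos]

/-- Monotone improvement of the iteration: for the normalized power
iteration `p (t+1) i = ν * p t i * w i / ∑ j, p t j * w j` with `w i = λ - q i > 0`,
the objective `H (p t) = ∑ i, q i * p t i` is nonincreasing in `t`, and strictly
decreasing unless `p t` is supported on a level set of `q`. -/
theorem stmt16 (N : ℕ) (ν lam : ℝ) (hν : 0 < ν)
    (q : Fin N → ℝ) (hlam : ∀ i, q i < lam)
    (w : Fin N → ℝ) (hw : ∀ i, w i = lam - q i)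
    (p : ℕ → Fin N → ℝ)
    (hpos : ∀ i, 0 < p 0 i) (hsum : ∑ i, p 0 i = ν)
    (hrec : ∀ t i, p (t + 1) i = ν * p t i * w i / (∑ j, p t j * w j)) :
    ∀ t, (∑ i, q i * p (t + 1) i ≤ ∑ i, q i * p t i) ∧
      (∑ i, q i * p (t + 1) i < ∑ i, q i * p t i ∨
        ∀ i j, p t i ≠ 0 → p t j ≠ 0 → q i = q j) := by
  have hwpos : ∀ i, 0 < w i := fun i => by rw [hw]; linarith [hlam i]
  have hNE : Nonempty (Fin N) := by
    rcases Nat.eq_zero_or_pos N with h | h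
    · subst h; simp at hsum; linarith
    · exact ⟨⟨0, h⟩⟩
  have hstate : ∀ t, (∀ i, 0 < p t i) ∧ (∑ i, p t i = ν) := by
    intro t
    induction t with
    | zero => exact ⟨hpos, hsum⟩
    | succ t ih =>
      have hS : 0 < ∑ j, p t j * w j :=
        Finset.sum_pos (fun j _ => mul_pos (ih.1 j) (hwpos j)) Finset.univ_nonempty
      constructor
      · intro i
        rw [hrec]
        exact div_pos (mul_pos (mul_pos hν (ih.1 i)) (hwpos i)) hS
      · simp only [hrec]
        rw [← Finset.sum_div]
        have : ∑ i, ν * p t i * w i = ν * ∑ j, p t j * w j := by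
          rw [Finset.mul_sum]; exact Finset.sum_congr rfl fun i _ => by ring
        rw [this, mul_div_assoc, div_self (ne_of_gt hS), mul_one]
  intro t
  obtain ⟨hPpos, hPsum⟩ := hstate t
  set A := ∑ i, q i * p t i with hA
  set B := ∑ i, q i^2 * p t i with hB
  have hS : 0 < ∑ j, p t j * w j :=
    Finset.sum_pos (fun j _ => mul_pos (hPpos j) (hwpos j)) Finset.univ_nonempty
  have hL : ∑ i, q i * p (t + 1) i = ν * (lam * A - B) / (∑ j, p t j * w j) := by
    simp only [hrec, ← mul_div_assoc]
    rw [← Finset.sum_div]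
    congr 1
    rw [hA, hB, mul_sub, Finset.mul_sum, Finset.mul_sum, Finset.mul_sum,
      ← Finset.sum_sub_distrib]
    refine Finset.sum_congr rfl fun i _ => ?_
    rw [hw]; ring
  have hSval : (∑ j, p t j * w j) = lam * ν - A := by
    rw [hA, ← hPsum, Finset.mul_sum, ← Finset.sum_sub_distrib]
    refine Finset.sum_congr rfl fun i _ => ?_
    rw [hw]; ring
  have hcs : A^2 ≤ ν * B := by
    have := stmt16_cs N (p t) q hPpos
    rw [hPsum] at this; exact this
  constructor
  · rw [hL, div_le_iff₀ hS, hSval]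
    nlinarith [hcs]
  · by_cases hconst : ∀ i j, p t i ≠ 0 → p t j ≠ 0 → q i = q j
    · exact Or.inr hconst
    · left
      push_neg at hconst
      obtain ⟨i0, j0, _, _, hq⟩ := hconst
      have hcs' : A^2 < ν * B := by
        have := stmt16_cs_strict N (p t) q hPpos i0 j0 hq
        rw [hPsum] at this; exact this
      rw [hL, div_lt_iff₀ hS, hSval]
      nlinarith [hcs']
end
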